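/- A line ℓ (2-dimensional real subspace of ℍ) is invariant under left multiplication by every unit complex number (i.e., ι(a) * ℓ = ℓ for all a ∈ ℂ with |a| = 1, where ι : ℂ → ℍ is the standard embedding) if and only if ℓ is a left complex line, i.e., ℓ = {ι(z) * p : z ∈ ℂ} for some nonzero p ∈ ℍ. -/

import Mathlib

open Quaternion
def ι (z : ℂ) : ℍ[ℝ] := ⟨z.re, z.im, 0, 0⟩
@[simp] lemma ι_re (z : ℂ) : (ι z).re = z.re := rfl
@[simp] lemma ι_imI (z : ℂ) : (ι z).imI = z.im := rfl
@[simp] lemma ι_imJ (z : ℂ) : (ι z).imJ = 0 := rfl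
@[simp] lemma ι_imK (z : ℂ) : (ι z).imK = 0 := rfl

lemma ι_mul (z w : ℂ) : ι (z * w) = ι z * ι w := by
  ext <;> simp [Complex.mul_re, Complex.mul_im]

lemma ι_decomp (z : ℂ) (p : ℍ[ℝ]) : ι z * p = z.re • p + z.im • (ι Complex.I * p) := by
  have : ι z = z.re • (1 : ℍ[ℝ]) + z.im • ι Complex.I := by ext <;> simp
  rw [this, add_mul, smul_mul_assoc, smul_mul_assoc, one_mul]

lemma ιI_sq (p : ℍ[ℝ]) : ι Complex.I * (ι Complex.I * p) = -p := by
  rw [← mul_assoc, ← ι_mul]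
  simp [Complex.I_mul_I]
  ext <;> simp

theorem invariant_iff_complex_line (ℓ : Submodule ℝ ℍ[ℝ]) (hℓ : Module.finrank ℝ ℓ = 2) :
    (∀ a : ℂ, ‖a‖ = 1 → (fun q => ι a * q) '' (ℓ : Set ℍ[ℝ]) = (ℓ : Set ℍ[ℝ])) ↔
      ∃ p : ℍ[ℝ], p ≠ 0 ∧ (ℓ : Set ℍ[ℝ]) = {v : ℍ[ℝ] | ∃ z : ℂ, v = ι z * p} := by
  constructor
  · intro h
    have hbot : ℓ ≠ ⊥ := by
      intro hb; rw [hb] at hℓ; simp at hℓ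
    obtain ⟨p, hpℓ, hp⟩ := Submodule.exists_mem_ne_zero_of_ne_bot hbot
    have hwℓ : ι Complex.I * p ∈ ℓ := by
      have h2 := h Complex.I (by simp)
      rw [← SetLike.mem_coe, ← h2]
      exact ⟨p, hpℓ, rfl⟩
    refine ⟨p, hp, ?_⟩
    have li : LinearIndependent ℝ ![p, ι Complex.I * p] := by
      rw [LinearIndependent.pair_iff]
      intro s t hst
      have e2 : s • (ι Complex.I * p) + t • (-p) = 0 := by
        have := congrArg (fun q => ι Complex.I * q) hst
        simpa [mul_add, mul_smul_comm, ιI_sq] using this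
      have key : (s * s + t * t) • p = 0 := by
        have expand : (s * s + t * t) • p =
            s • (s • p + t • (ι Complex.I * p)) - t • (s • (ι Complex.I * p) + t • (-p)) := by
          module
        rw [expand, hst, e2]; simp
      have hst0 : s * s + t * t = 0 := by
        rcases smul_eq_zero.mp key with h' | h'
        · exact h'
        · exact absurd h' hp
      constructor <;> nlinarith
    have hspan : Submodule.span ℝ {p, ι Complex.I * p} = ℓ := by
      apply Submodule.eq_of_le_of_finrank_le
      · rw [Submodule.span_le]
        rintro x (rfl | rfl)
        · simpa using hpℓ
        · simpa using hwℓ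
      · rw [hℓ]
        have hfr : Module.finrank ℝ (Submodule.span ℝ (Set.range ![p, ι Complex.I * p])) = 2 := by
          rw [finrank_span_eq_card li]; simp
        rw [show ({p, ι Complex.I * p} : Set ℍ[ℝ]) = Set.range ![p, ι Complex.I * p] by
          ext x; simp [Matrix.range_cons, or_comm]]
        omega
    ext x
    rw [← hspan]
    simp only [SetLike.mem_coe, Submodule.mem_span_pair, Set.mem_setOf_eq]
    constructor
    · rintro ⟨a, b, rfl⟩
      exact ⟨⟨a, b⟩, by rw [ι_decomp ⟨a, b⟩ p]⟩
    · rintro ⟨z, rfl⟩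
      exact ⟨z.re, z.im, (ι_decomp z p).symm⟩
  · rintro ⟨p, hp, hset⟩ a ha
    have ha0 : a ≠ 0 := by
      intro h; rw [h] at ha; simp at ha
    rw [hset]
    ext v
    constructor
    · rintro ⟨q, ⟨z, rfl⟩, rfl⟩
      exact ⟨a * z, by rw [ι_mul, mul_assoc]⟩
    · rintro ⟨z, rfl⟩
      refine ⟨ι (a⁻¹ * z) * p, ⟨a⁻¹ * z, rfl⟩, ?_⟩
      simp only
      rw [← mul_assoc, ← ι_mul, ← mul_assoc, mul_inv_cancel₀ ha0, one_mul]
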